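/- For every nonzero integer r and every non-negative integer n, Σ_{j=0}^{n} (−1)^{rj} L_{r(n−2j)} = Σ_{j=0}^{n} (L_r/2)^j L_{r(n−j)}, and the common value of these two sums equals 2·F_{r(n+1)}/F_r. -/

import Mathlib

open Finset

/-- Integer-indexed Fibonacci numbers: `fibZ n = F n`, with
`F (-n) = (-1)^(n+1) * F n`. -/
def fibZ (n : ℤ) : ℤ :=
  if 0 ≤ n then (Nat.fib n.toNat : ℤ) else (-1) ^ (n.natAbs + 1) * (Nat.fib n.natAbs : ℤ)

/-- Integer-indexed Lucas numbers: `lucZ n = L n = F (n+1) + F (n-1)`. -/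
def lucZ (n : ℤ) : ℤ := fibZ (n + 1) + fibZ (n - 1)


lemma fibZ_natCast (m : ℕ) : fibZ (m : ℤ) = (Nat.fib m : ℤ) := by
  simp [fibZ]

lemma fibZ_neg_natCast (m : ℕ) : fibZ (-(m : ℤ)) = (-1) ^ (m + 1) * (Nat.fib m : ℤ) := by
  cases m with
  | zero => simp [fibZ]
  | succ k =>
    rw [fibZ, if_neg (by omega)]
    have : (-((k+1:ℕ):ℤ)).natAbs = k + 1 := by omega
    rw [this]

lemma fibZ_neg (n : ℤ) : fibZ (-n) = -((n.negOnePow : ℤ) * fibZ n) := by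
  obtain ⟨m, rfl | rfl⟩ := n.eq_nat_or_neg
  · rw [fibZ_neg_natCast, fibZ_natCast, Int.coe_negOnePow_natCast]
    ring
  · rw [neg_neg, fibZ_natCast, fibZ_neg_natCast, Int.negOnePow_neg,
      Int.coe_negOnePow_natCast]
    have : ((-1:ℤ)) ^ m * ((-1:ℤ)) ^ (m+1) = -1 := by
      rw [← pow_add]
      exact Odd.neg_one_pow ⟨m, by ring⟩
    calc ((Nat.fib m : ℤ)) = -(((-1:ℤ))^m * ((-1:ℤ))^(m+1)) * Nat.fib m := by rw [this]; ring
    _ = -((-1) ^ m * ((-1) ^ (m + 1) * (Nat.fib m : ℤ))) := by ring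

lemma fibZ_add_two (n : ℤ) : fibZ (n + 2) = fibZ (n + 1) + fibZ n := by
  rcases le_or_gt 0 n with h | h
  · obtain ⟨m, rfl⟩ := Int.eq_ofNat_of_zero_le h
    rw [show ((m:ℤ) + 2) = ((m+2 : ℕ) : ℤ) by push_cast; ring,
      show ((m:ℤ) + 1) = ((m+1 : ℕ) : ℤ) by push_cast; ring,
      fibZ_natCast, fibZ_natCast, fibZ_natCast, Nat.fib_add_two]
    push_cast; ring
  · obtain ⟨m, rfl⟩ : ∃ m : ℕ, n = -(m : ℤ) := ⟨n.natAbs, by omega⟩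
    match m with
    | 1 => decide
    | 2 => decide
    | (k+3) =>
      have hf : Nat.fib (k+3) = Nat.fib (k+1) + Nat.fib (k+2) := Nat.fib_add_two (n := k+1)
      rw [show (-((k+3:ℕ):ℤ) + 2) = -((k+1:ℕ):ℤ) by push_cast; ring,
        show (-((k+3:ℕ):ℤ) + 1) = -((k+2:ℕ):ℤ) by push_cast; ring,
        fibZ_neg_natCast, fibZ_neg_natCast, fibZ_neg_natCast, hf]
      push_cast; ring

lemma lucZ_add_two (n : ℤ) : lucZ (n + 2) = lucZ (n + 1) + lucZ n := by
  unfold lucZ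
  rw [show n + 2 + 1 = (n+1) + 2 by ring, show n + 2 - 1 = (n-1) + 2 by ring,
    fibZ_add_two (n+1), fibZ_add_two (n-1),
    show n + 1 + 1 = (n+1) + 1 by ring, show n + 1 - 1 = (n-1) + 1 by ring]
  ring

lemma fib_like_eq_zero (s : ℤ → ℤ) (hrec : ∀ n : ℤ, s (n + 2) = s (n + 1) + s n)
    (h0 : s 0 = 0) (h1 : s 1 = 0) : ∀ n : ℤ, s n = 0 := by
  have key : ∀ n : ℤ, s n = 0 ∧ s (n + 1) = 0 := by
    intro n
    induction n using Int.induction_on with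
    | zero => exact ⟨h0, h1⟩
    | succ i ih =>
      refine ⟨ih.2, ?_⟩
      have h := hrec i
      rw [show (i:ℤ) + 1 + 1 = (i:ℤ) + 2 by ring]
      rw [h, ih.1, ih.2]; ring
    | pred i ih =>
      refine ⟨?_, by rw [show -(i:ℤ) - 1 + 1 = -(i:ℤ) by ring]; exact ih.1⟩
      have h := hrec (-(i:ℤ) - 1)
      rw [show -(i:ℤ) - 1 + 2 = -(i:ℤ) + 1 by ring, show -(i:ℤ) - 1 + 1 = -(i:ℤ) by ring,
        ih.1, ih.2] at h
      omega
  exact fun n => (key n).1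

lemma fibZ_zero : fibZ 0 = 0 := by decide
lemma fibZ_one : fibZ 1 = 1 := by decide
lemma lucZ_zero : lucZ 0 = 2 := by decide
lemma lucZ_one : lucZ 1 = 1 := by decide

lemma negOnePow_sq (r : ℤ) : (r.negOnePow : ℤ) * (r.negOnePow : ℤ) = 1 := by
  rw [← Units.val_mul, Int.units_mul_self, Units.val_one]

/-- `F_r L_m = F_{m+r} - (-1)^r F_{m-r}`. -/
lemma keyI (r m : ℤ) :
    fibZ r * lucZ m = fibZ (m + r) - (r.negOnePow : ℤ) * fibZ (m - r) := by
  set s : ℤ → ℤ := fun m => fibZ (m + r) - (r.negOnePow : ℤ) * fibZ (m - r) - fibZ r * lucZ m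
    with hs
  have hz : ∀ m : ℤ, s m = 0 := by
    apply fib_like_eq_zero
    · intro n
      simp only [hs]
      rw [show n + 2 + r = (n + r) + 2 by ring, show n + 2 - r = (n - r) + 2 by ring,
        fibZ_add_two (n + r), fibZ_add_two (n - r), lucZ_add_two,
        show n + 1 + r = (n + r) + 1 by ring, show n + 1 - r = (n - r) + 1 by ring]
      ring
    · simp only [hs]
      rw [lucZ_zero, zero_add, zero_sub, fibZ_neg]
      linear_combination (fibZ r) * negOnePow_sq r
    · simp only [hs]
      have hneg : (((r - 1) : ℤ).negOnePow : ℤ) = -(r.negOnePow : ℤ) := by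
        rw [Int.negOnePow_sub, Int.negOnePow_one]
        push_cast; ring
      rw [lucZ_one, show (1 : ℤ) - r = -(r - 1) by ring, fibZ_neg, hneg]
      have h2 := fibZ_add_two (r - 1)
      rw [show r - 1 + 2 = 1 + r by ring, show r - 1 + 1 = r by ring] at h2
      linear_combination h2 - (fibZ (r - 1)) * negOnePow_sq r
  have := hz m
  simp only [hs] at this
  linarith

/-- `2 F_{m+r} = F_r L_m + L_r F_m`. -/
lemma keyII (r m : ℤ) :
    2 * fibZ (m + r) = fibZ r * lucZ m + lucZ r * fibZ m := by
  set s : ℤ → ℤ := fun m => 2 * fibZ (m + r) - fibZ r * lucZ m - lucZ r * fibZ m with hs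
  have hz : ∀ m : ℤ, s m = 0 := by
    apply fib_like_eq_zero
    · intro n
      simp only [hs]
      rw [show n + 2 + r = (n + r) + 2 by ring, fibZ_add_two (n + r), fibZ_add_two n,
        lucZ_add_two, show n + 1 + r = (n + r) + 1 by ring]
      ring
    · simp only [hs]
      rw [lucZ_zero, fibZ_zero, zero_add]; ring
    · simp only [hs]
      rw [lucZ_one, fibZ_one, lucZ, show r + 1 = 1 + r by ring]
      have h2 := fibZ_add_two (r - 1)
      rw [show r - 1 + 2 = 1 + r by ring, show r - 1 + 1 = r by ring] at h2
      linarith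
  have := hz m
  simp only [hs] at this
  linarith

lemma fibZ_ne_zero {r : ℤ} (hr : r ≠ 0) : fibZ r ≠ 0 := by
  obtain ⟨m, rfl | rfl⟩ := r.eq_nat_or_neg
  · rw [fibZ_natCast]
    have hm : 0 < m := by omega
    exact_mod_cast (Nat.fib_pos.2 hm).ne'
  · rw [fibZ_neg_natCast]
    have hm : 0 < m := by omega
    have h1 : (Nat.fib m : ℤ) ≠ 0 := by exact_mod_cast (Nat.fib_pos.2 hm).ne'
    exact mul_ne_zero (pow_ne_zero _ (by norm_num)) h1

theorem thm1_fib_lucas_sums (r : ℤ) (hr : r ≠ 0) (n : ℕ) :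
    (∑ j ∈ Finset.range (n + 1),
        (-1 : ℚ) ^ (r * (j : ℤ)) * (lucZ (r * ((n : ℤ) - 2 * j)) : ℚ)
      = ∑ j ∈ Finset.range (n + 1),
        ((lucZ r : ℚ) / 2) ^ j * (lucZ (r * ((n : ℤ) - j)) : ℚ)) ∧
    (∑ j ∈ Finset.range (n + 1),
        (-1 : ℚ) ^ (r * (j : ℤ)) * (lucZ (r * ((n : ℤ) - 2 * j)) : ℚ)
      = 2 * (fibZ (r * ((n : ℤ) + 1)) : ℚ) / (fibZ r : ℚ)) := by
  have hFr : (fibZ r : ℚ) ≠ 0 := Int.cast_ne_zero.2 (fibZ_ne_zero hr)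
  have hone : (-1 : ℚ) ≠ 0 := by norm_num
  -- telescoping function for sum A
  have hA : (∑ j ∈ Finset.range (n + 1),
        (-1 : ℚ) ^ (r * (j : ℤ)) * (lucZ (r * ((n : ℤ) - 2 * j)) : ℚ)) * (fibZ r : ℚ)
      = 2 * (fibZ (r * ((n : ℤ) + 1)) : ℚ) := by
    set g : ℕ → ℚ := fun j => (-1 : ℚ) ^ (r * (j : ℤ)) * (fibZ (r * ((n : ℤ) + 1 - 2 * j)) : ℚ)
      with hg
    have step : ∀ j ∈ Finset.range (n + 1),
        (-1 : ℚ) ^ (r * (j : ℤ)) * (lucZ (r * ((n : ℤ) - 2 * j)) : ℚ) * (fibZ r : ℚ)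
          = g j - g (j + 1) := by
      intro j _
      have h' : (fibZ r : ℚ) * (lucZ (r * ((n : ℤ) - 2 * j)) : ℚ)
          = (fibZ (r * ((n : ℤ) - 2 * j) + r) : ℚ)
            - (-1 : ℚ) ^ r * (fibZ (r * ((n : ℤ) - 2 * j) - r) : ℚ) := by
        rw [← Int.cast_negOnePow ℚ r]
        exact_mod_cast congrArg (Int.cast : ℤ → ℚ) (keyI r (r * ((n : ℤ) - 2 * j)))
      simp only [hg]
      push_cast
      rw [show r * ((n : ℤ) + 1 - 2 * (j : ℤ)) = r * ((n : ℤ) - 2 * j) + r by ring,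
        show r * ((n : ℤ) + 1 - 2 * ((j : ℤ) + 1)) = r * ((n : ℤ) - 2 * j) - r by ring,
        show r * ((j : ℤ) + 1) = r * (j : ℤ) + r by ring, zpow_add₀ hone]
      linear_combination ((-1 : ℚ) ^ (r * (j : ℤ))) * h'
    rw [Finset.sum_mul, Finset.sum_congr rfl step, Finset.sum_range_sub' g]
    have hg0 : g 0 = (fibZ (r * ((n : ℤ) + 1)) : ℚ) := by simp [hg]
    have hgn : g (n + 1) = -(fibZ (r * ((n : ℤ) + 1)) : ℚ) := by
      simp only [hg]
      push_cast
      rw [show r * ((n : ℤ) + 1 - 2 * ((n : ℤ) + 1)) = -(r * ((n : ℤ) + 1)) by ring,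
        fibZ_neg]
      push_cast
      rw [Int.cast_negOnePow ℚ]
      have hsq : (-1 : ℚ) ^ (r * ((n : ℤ) + 1)) * (-1 : ℚ) ^ (r * ((n : ℤ) + 1)) = 1 := by
        rw [← mul_zpow]; norm_num
      linear_combination (-(fibZ (r * ((n : ℤ) + 1)) : ℚ)) * hsq
    rw [hg0, hgn]
    ring
  -- telescoping function for sum B
  have hB : (∑ j ∈ Finset.range (n + 1),
        ((lucZ r : ℚ) / 2) ^ j * (lucZ (r * ((n : ℤ) - j)) : ℚ)) * (fibZ r : ℚ)
      = 2 * (fibZ (r * ((n : ℤ) + 1)) : ℚ) := by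
    set h : ℕ → ℚ := fun j => 2 * ((lucZ r : ℚ) / 2) ^ j * (fibZ (r * ((n : ℤ) + 1 - j)) : ℚ)
      with hh
    have step : ∀ j ∈ Finset.range (n + 1),
        ((lucZ r : ℚ) / 2) ^ j * (lucZ (r * ((n : ℤ) - j)) : ℚ) * (fibZ r : ℚ)
          = h j - h (j + 1) := by
      intro j _
      have h'' : 2 * (fibZ (r * ((n : ℤ) - j) + r) : ℚ)
          = (fibZ r : ℚ) * (lucZ (r * ((n : ℤ) - j)) : ℚ)
            + (lucZ r : ℚ) * (fibZ (r * ((n : ℤ) - j)) : ℚ) := by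
        exact_mod_cast congrArg (Int.cast : ℤ → ℚ) (keyII r (r * ((n : ℤ) - j)))
      simp only [hh]
      push_cast
      rw [show r * ((n : ℤ) + 1 - (j : ℤ)) = r * ((n : ℤ) - j) + r by ring,
        show r * ((n : ℤ) + 1 - ((j : ℤ) + 1)) = r * ((n : ℤ) - j) by ring, pow_succ]
      linear_combination (-(((lucZ r : ℚ) / 2) ^ j)) * h''
    rw [Finset.sum_mul, Finset.sum_congr rfl step, Finset.sum_range_sub' h]
    have hh0 : h 0 = 2 * (fibZ (r * ((n : ℤ) + 1)) : ℚ) := by simp [hh]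
    have hhn : h (n + 1) = 0 := by
      simp only [hh]
      push_cast
      rw [show r * ((n : ℤ) + 1 - ((n : ℤ) + 1)) = 0 by ring, fibZ_zero]
      norm_num
    rw [hh0, hhn]
    ring
  constructor
  · exact mul_right_cancel₀ hFr (hA.trans hB.symm)
  · rw [eq_div_iff hFr]
    exact hA
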